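/- Let (G, B₁, B₂) be a Rota-Baxter system of groups with descendent operation ∘. For t₁, t₂ ∈ G, the map Ψ: G_{t₁} → G_{t₂} defined by Ψ(a) = a ∘ e_{t₂} is a group isomorphism between the groups (G_{t₁}, ∘) and (G_{t₂}, ∘). -/
import Mathlib


theorem stmt_15 {G : Type*} [Group G] (B₁ B₂ : G → G)
    (h1 : ∀ a b : G, B₁ a * B₁ b = B₁ (B₁ a * b * B₂ a))
    (h2 : ∀ a b : G, B₂ b * B₂ a = B₂ (B₁ a * b * B₂ a))
    (circ : G → G → G) (hcirc : ∀ a b, circ a b = B₁ a * b * B₂ a)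
    (t₁ t₂ : G) (e₁ e₂ : G)
    (he₁ : e₁ = (B₁ t₁)⁻¹ * t₁ * (B₂ t₁)⁻¹) (he₂ : e₂ = (B₁ t₂)⁻¹ * t₂ * (B₂ t₂)⁻¹)
    (S₁ S₂ : Set G) (hS₁ : S₁ = {a : G | circ a e₁ = a}) (hS₂ : S₂ = {a : G | circ a e₂ = a})
    (Ψ : G → G) (hΨ : ∀ a, Ψ a = circ a e₂) :
    Set.BijOn Ψ S₁ S₂ ∧ ∀ a ∈ S₁, ∀ b ∈ S₁, Ψ (circ a b) = circ (Ψ a) (Ψ b) := by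
  -- e_t is a left identity for circ on all of G
  have lid : ∀ t e : G, e = (B₁ t)⁻¹ * t * (B₂ t)⁻¹ → ∀ x, circ e x = x := by
    intro t e he x
    have hte : B₁ t * e * B₂ t = t := by rw [he]; group
    have hB1 : B₁ e = 1 := by
      have h := h1 t e
      rw [hte] at h
      have : B₁ t * B₁ e = B₁ t * 1 := by rw [mul_one, h]
      exact mul_left_cancel this
    have hB2 : B₂ e = 1 := by
      have h := h2 t e
      rw [hte] at h
      have : B₂ e * B₂ t = 1 * B₂ t := by rw [one_mul, h]
      exact mul_right_cancel this
    rw [hcirc, hB1, hB2, one_mul, mul_one]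
  have lid₁ := lid t₁ e₁ he₁
  have lid₂ := lid t₂ e₂ he₂
  have assoc : ∀ a b c, circ (circ a b) c = circ a (circ b c) := by
    intro a b c
    rw [hcirc (circ a b) c, hcirc a b, ← h1, ← h2, hcirc a, hcirc b]
    group
  refine ⟨⟨?_, ?_, ?_⟩, ?_⟩
  · -- MapsTo
    intro a _
    rw [hS₂, Set.mem_setOf_eq, hΨ, assoc, lid₂]
  · -- InjOn
    intro a ha b hb hab
    rw [hS₁, Set.mem_setOf_eq] at ha hb
    rw [hΨ, hΨ] at hab
    calc a = circ a e₁ := ha.symm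
    _ = circ (circ a e₂) e₁ := by rw [assoc, lid₂]
    _ = circ (circ b e₂) e₁ := by rw [hab]
    _ = circ b e₁ := by rw [assoc, lid₂]
    _ = b := hb
  · -- SurjOn
    intro c hc
    rw [hS₂, Set.mem_setOf_eq] at hc
    refine ⟨circ c e₁, ?_, ?_⟩
    · rw [hS₁, Set.mem_setOf_eq, assoc, lid₁]
    · rw [hΨ, assoc, lid₁, hc]
  · -- homomorphism
    intro a _ b _
    rw [hΨ, hΨ, hΨ, assoc, assoc, lid₂]
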